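/- Let k ≥ 2 be an integer and β = 1/(2(k−1)). Let μ be a probability distribution over subsets of a finite set M with P_μ[j ∈ T] ≤ β/(1+β) for all j. Then for every MPH-k function v and every S ⊆ M, β·∑_T μ(T)·v(S \ T) ≥ (1/(4k−2))·v(S). -/

import Mathlib

open Finset

/-- `v` is an MPH-`k` function: the pointwise maximum of finitely many PH-`k`
functions, i.e. functions of the form `S ↦ ∑ X ⊆ S, w X` with `w ≥ 0`
supported on sets of cardinality at most `k`. -/
def IsMPH {ι : Type*} [DecidableEq ι] (k : ℕ) (v : Finset ι → ℝ) : Prop :=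
  ∃ t : ℕ, 0 < t ∧ ∃ w : Fin t → Finset ι → ℝ,
    (∀ ℓ X, 0 ≤ w ℓ X) ∧
    (∀ (ℓ : Fin t) (X : Finset ι), k < X.card → w ℓ X = 0) ∧
    (∀ S : Finset ι, ∃ ℓ : Fin t, v S = ∑ X ∈ S.powerset, w ℓ X) ∧
    (∀ (S : Finset ι) (ℓ : Fin t), (∑ X ∈ S.powerset, w ℓ X) ≤ v S)

theorem stmt_14 {ι : Type*} [Fintype ι] [DecidableEq ι]
    (μ : Finset ι → ℝ) (hμ0 : ∀ T, 0 ≤ μ T) (hμ1 : ∑ T : Finset ι, μ T = 1)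
    (k : ℕ) (hk : 2 ≤ k)
    (h : ∀ j : ι, (∑ T : Finset ι, if j ∈ T then μ T else 0) ≤
      (1 / (2 * ((k : ℝ) - 1))) / (1 + 1 / (2 * ((k : ℝ) - 1))))
    (v : Finset ι → ℝ) (hv : IsMPH k v) (S : Finset ι) :
    (1 / (2 * ((k : ℝ) - 1))) * (∑ T : Finset ι, μ T * v (S \ T)) ≥
      (1 / (4 * (k : ℝ) - 2)) * v S := by
  obtain ⟨t, ht, w, hw0, hwk, hmax, hle⟩ := hv
  obtain ⟨ℓ, hℓ⟩ := hmax S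
  have hk1 : (1:ℝ) ≤ (k:ℝ) - 1 := by
    have : (2:ℝ) ≤ (k:ℝ) := by exact_mod_cast hk
    linarith
  have h2k1 : (0:ℝ) < 2*(k:ℝ)-1 := by linarith
  have hkm1 : (0:ℝ) < (k:ℝ)-1 := by linarith
  have hmarg : ∀ j : ι, (∑ T : Finset ι, if j ∈ T then μ T else 0) ≤ 1/(2*(k:ℝ)-1) := by
    intro j
    have hh := h j
    have heq : (1 / (2 * ((k : ℝ) - 1))) / (1 + 1 / (2 * ((k : ℝ) - 1))) = 1/(2*(k:ℝ)-1) := by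
      have h1 : (2*((k:ℝ)-1)) ≠ 0 := by nlinarith
      have h2 : (2*(k:ℝ)-1) ≠ 0 := ne_of_gt h2k1
      field_simp
      ring
    linarith [heq ▸ hh]
  have hdisj : ∀ X ∈ S.powerset,
      ((k:ℝ)-1)/(2*(k:ℝ)-1) * w ℓ X ≤ w ℓ X * ∑ T : Finset ι, if Disjoint X T then μ T else 0 := by
    intro X _
    by_cases hw : w ℓ X = 0
    · simp [hw]
    · have hcard : X.card ≤ k := by
        by_contra hc; push_neg at hc; exact hw (hwk ℓ X hc)
      have hsplit : (∑ T : Finset ι, if Disjoint X T then μ T else 0)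
          = 1 - ∑ T : Finset ι, if ¬ Disjoint X T then μ T else 0 := by
        rw [eq_sub_iff_add_eq, ← Finset.sum_add_distrib, ← hμ1]
        apply Finset.sum_congr rfl
        intro T _
        by_cases hd : Disjoint X T <;> simp [hd]
      have hub : (∑ T : Finset ι, if ¬ Disjoint X T then μ T else 0)
          ≤ ∑ j ∈ X, ∑ T : Finset ι, if j ∈ T then μ T else 0 := by
        rw [Finset.sum_comm]
        apply Finset.sum_le_sum
        intro T _
        have hnn : ∀ i : ι, 0 ≤ if i ∈ T then μ T else 0 := by
          intro i
          by_cases hi : i ∈ T <;> simp [hi, hμ0 T]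
        by_cases hd : Disjoint X T
        · simp only [hd, not_true, if_false]
          exact Finset.sum_nonneg fun i _ => hnn i
        · simp only [hd, not_false_iff, if_true]
          obtain ⟨j, hjX, hjT⟩ := Finset.not_disjoint_iff.mp hd
          have hs := Finset.single_le_sum (f := fun i => if i ∈ T then μ T else 0)
            (fun i _ => hnn i) hjX
          simpa [hjT] using hs
      have hub2 : (∑ j ∈ X, ∑ T : Finset ι, if j ∈ T then μ T else 0) ≤ (k:ℝ) * (1/(2*(k:ℝ)-1)) := by
        have h1 : (∑ j ∈ X, ∑ T : Finset ι, if j ∈ T then μ T else 0)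
            ≤ ∑ _j ∈ X, 1/(2*(k:ℝ)-1) := Finset.sum_le_sum (fun j _ => hmarg j)
        have h2 : (∑ _j ∈ X, 1/(2*(k:ℝ)-1)) = (X.card : ℝ) * (1/(2*(k:ℝ)-1)) := by
          rw [Finset.sum_const, nsmul_eq_mul]
        have h3 : (X.card : ℝ) * (1/(2*(k:ℝ)-1)) ≤ (k:ℝ) * (1/(2*(k:ℝ)-1)) := by
          apply mul_le_mul_of_nonneg_right _ (by positivity)
          exact_mod_cast hcard
        rw [h2] at h1
        linarith
      have hkey : ((k:ℝ)-1)/(2*(k:ℝ)-1) ≤ ∑ T : Finset ι, if Disjoint X T then μ T else 0 := by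
        rw [hsplit]
        have he : ((k:ℝ)-1)/(2*(k:ℝ)-1) = 1 - (k:ℝ) * (1/(2*(k:ℝ)-1)) := by
          rw [mul_one_div, eq_sub_iff_add_eq, ← add_div, div_eq_one_iff_eq (ne_of_gt h2k1)]
          ring
        rw [he]
        linarith
      have := mul_le_mul_of_nonneg_right hkey (hw0 ℓ X)
      linarith [this, mul_comm (w ℓ X) (∑ T : Finset ι, if Disjoint X T then μ T else 0)]
  have hmain : ((k:ℝ)-1)/(2*(k:ℝ)-1) * v S ≤ ∑ T : Finset ι, μ T * v (S \ T) := by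
    have e1 : ((k:ℝ)-1)/(2*(k:ℝ)-1) * v S
        = ∑ X ∈ S.powerset, ((k:ℝ)-1)/(2*(k:ℝ)-1) * w ℓ X := by
      rw [hℓ, Finset.mul_sum]
    have e2 : (∑ X ∈ S.powerset, ((k:ℝ)-1)/(2*(k:ℝ)-1) * w ℓ X)
        ≤ ∑ X ∈ S.powerset, w ℓ X * ∑ T : Finset ι, if Disjoint X T then μ T else 0 :=
      Finset.sum_le_sum hdisj
    have e3 : (∑ X ∈ S.powerset, w ℓ X * ∑ T : Finset ι, if Disjoint X T then μ T else 0)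
        = ∑ T : Finset ι, ∑ X ∈ S.powerset, w ℓ X * (if Disjoint X T then μ T else 0) := by
      rw [← Finset.sum_comm]
      apply Finset.sum_congr rfl
      intro X _
      rw [Finset.mul_sum]
    have e4 : (∑ T : Finset ι, ∑ X ∈ S.powerset, w ℓ X * (if Disjoint X T then μ T else 0))
        = ∑ T : Finset ι, μ T * ∑ X ∈ (S \ T).powerset, w ℓ X := by
      apply Finset.sum_congr rfl
      intro T _
      rw [Finset.mul_sum]
      have hp : (S \ T).powerset = S.powerset.filter (fun X => Disjoint X T) := by
        ext X
        simp [Finset.subset_sdiff, and_comm]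
      rw [hp, Finset.sum_filter]
      apply Finset.sum_congr rfl
      intro X _
      by_cases hd : Disjoint X T <;> simp [hd, mul_comm]
    have e5 : (∑ T : Finset ι, μ T * ∑ X ∈ (S \ T).powerset, w ℓ X)
        ≤ ∑ T : Finset ι, μ T * v (S \ T) := by
      apply Finset.sum_le_sum
      intro T _
      exact mul_le_mul_of_nonneg_left (hle (S \ T) ℓ) (hμ0 T)
    rw [e1]
    rw [e3, e4] at e2
    linarith
  rw [ge_iff_le]
  have heq2 : (1 / (4 * (k:ℝ) - 2)) * v S
      = (1/(2*((k:ℝ)-1))) * ((((k:ℝ)-1)/(2*(k:ℝ)-1)) * v S) := by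
    rw [← mul_assoc]
    congr 1
    rw [div_mul_div_comm, one_mul, div_eq_div_iff (ne_of_gt (show (0:ℝ) < 4*(k:ℝ)-2 by linarith)) (ne_of_gt (mul_pos (show (0:ℝ) < 2*((k:ℝ)-1) by linarith) h2k1))]
    ring
  rw [heq2]
  have hβ : (0:ℝ) < 2*((k:ℝ)-1) := by linarith
  exact mul_le_mul_of_nonneg_left hmain (le_of_lt (div_pos one_pos hβ))
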